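/- arXiv:1412.2226 — 2 statements merged into one kernel-verified Lean document; each statement's English description precedes it below -/
import Mathlib

section
/- Let M be a balanced allocation. M is the outcome of every balanced alternation policy if and only if for every round index t with 1 ≤ t ≤ k and every agent a_j, the item p_j^t is agent a_j's most preferred item among the items of I not contained in { p_{j'}^i : 1 ≤ j' ≤ n, 1 ≤ i < t } (the items M allocates in earlier rounds). -/
open Finset
open scoped Classical

/-- The most preferred item of a nonempty finset w.r.t. a linear order
(greater means more preferred). -/
noncomputable def favorite {ι : Type} (L : LinearOrder ι) (S : Finset ι) (h : S.Nonempty) : ι :=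
  @Finset.max' ι L S h

/-- Sequential allocation: process the turns in order; at each turn the agent whose
turn it is picks her most preferred item among the items not yet allocated.
Returns the list of (agent, item) picks, in order. -/
noncomputable def seqAlloc {n : ℕ} {ι : Type} [DecidableEq ι]
    (P : Fin n → LinearOrder ι) : List (Fin n) → Finset ι → List (Fin n × ι)
  | [], _ => []
  | a :: rest, S =>
    if h : S.Nonempty then
      (a, favorite (P a) S h) :: seqAlloc P rest (S.erase (favorite (P a) S h))
    else []

/-- `M` is the outcome of the policy `π`: every item is picked by the agent that
`M` assigns it to. -/
def IsOutcome {n : ℕ} {ι : Type} [Fintype ι] [DecidableEq ι]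
    (P : Fin n → LinearOrder ι) (π : List (Fin n)) (M : ι → Fin n) : Prop :=
  ∀ o : ι, (M o, o) ∈ seqAlloc P π Finset.univ

/-- The set of items that agent `a` picks under the policy `π`. -/
noncomputable def receives {n : ℕ} {ι : Type} [Fintype ι] [DecidableEq ι]
    (P : Fin n → LinearOrder ι) (π : List (Fin n)) (a : Fin n) : Finset ι :=
  Finset.univ.filter (fun o => (a, o) ∈ seqAlloc P π Finset.univ)

/-- An allocation `M` is Pareto optimal if there is no bijection `f` of the items such
that every agent weakly prefers `f o` to `o` for each item `o` she gets, with at least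
one strict preference. -/
def ParetoOptimal {n : ℕ} {ι : Type} (P : Fin n → LinearOrder ι) (M : ι → Fin n) : Prop :=
  ¬ ∃ f : ι ≃ ι, (∀ o : ι, (P (M o)).le o (f o)) ∧ (∃ o : ι, (P (M o)).lt o (f o))

/-- A policy is balanced if every agent has exactly `k` turns. -/
def BalancedPolicy {n : ℕ} (k : ℕ) (π : List (Fin n)) : Prop :=
  ∀ a : Fin n, π.count a = k

/-- An allocation is balanced if every agent receives exactly `k` items. -/
def BalancedAlloc {n : ℕ} {ι : Type} [Fintype ι] (k : ℕ) (M : ι → Fin n) : Prop :=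
  ∀ a : Fin n, (Finset.univ.filter (fun o => M o = a)).card = k

/-- A policy is recursively balanced if it splits into `k` consecutive rounds of `n`
turns each, every agent having exactly one turn in each round. -/
def RecBalanced (n k : ℕ) (π : List (Fin n)) : Prop :=
  ∃ rounds : List (List (Fin n)), rounds.length = k ∧
    (∀ r ∈ rounds, r.length = n ∧ ∀ a : Fin n, r.count a = 1) ∧
    π = rounds.flatten

/-- A strict alternation policy: every one of the `k` rounds uses the same order `σ`
over the agents. -/
def StrictAlt (n k : ℕ) (π : List (Fin n)) : Prop :=
  ∃ σ : List (Fin n), σ.length = n ∧ (∀ a : Fin n, σ.count a = 1) ∧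
    π = (List.replicate k σ).flatten

/-- A balanced alternation policy: odd-numbered rounds use the order `σ` over the agents
and even-numbered rounds use its reverse. -/
def BalAlt (n k : ℕ) (π : List (Fin n)) : Prop :=
  ∃ σ : List (Fin n), σ.length = n ∧ (∀ a : Fin n, σ.count a = 1) ∧
    π = ((List.range k).map (fun r => if r % 2 = 0 then σ else σ.reverse)).flatten

/-- `p j i` (for `1 ≤ i ≤ k`) is the item ranked `i`-th by agent `j` among the items `M`
allocates to `j`: it is allocated to `j`, and exactly `i - 1` of the items allocated
to `j` are strictly preferred to it by agent `j`. -/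
def IsRankingOf {n : ℕ} {ι : Type} [Fintype ι] (P : Fin n → LinearOrder ι) (k : ℕ)
    (M : ι → Fin n) (p : Fin n → ℕ → ι) : Prop :=
  ∀ (j : Fin n) (i : ℕ), 1 ≤ i → i ≤ k →
    M (p j i) = j ∧
    (Finset.univ.filter (fun o => M o = j ∧ (P j).lt (p j i) o)).card = i - 1

/-- Condition 3: for all `1 ≤ t < s ≤ k` and all agents `j, j'`, agent `j` strictly
prefers `p j t` to `p j' s`. -/
def Cond3 {n : ℕ} {ι : Type} (P : Fin n → LinearOrder ι) (k : ℕ) (p : Fin n → ℕ → ι) : Prop :=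
  ∀ t s : ℕ, 1 ≤ t → t < s → s ≤ k → ∀ j j' : Fin n, (P j).lt (p j' s) (p j t)

/-- The edge relation of the directed graph `G_M`: for odd `i ≤ k` an edge `a → b`
whenever `b` strictly prefers `p a i` to `p b i`, and for even `i ≤ k` an edge `a → b`
whenever `a` strictly prefers `p b i` to `p a i`. -/
def GM {n : ℕ} {ι : Type} (P : Fin n → LinearOrder ι) (k : ℕ) (p : Fin n → ℕ → ι)
    (a b : Fin n) : Prop :=
  (∃ i : ℕ, 1 ≤ i ∧ i ≤ k ∧ i % 2 = 1 ∧ (P b).lt (p b i) (p a i)) ∨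
  (∃ i : ℕ, 1 ≤ i ∧ i ≤ k ∧ i % 2 = 0 ∧ (P a).lt (p a i) (p b i))

/-- The edge relation of the directed graph `H_M`: for each `i ≤ k` an edge `a → b`
whenever `b` strictly prefers `p a i` to `p b i`. -/
def HM {n : ℕ} {ι : Type} (P : Fin n → LinearOrder ι) (k : ℕ) (p : Fin n → ℕ → ι)
    (a b : Fin n) : Prop :=
  ∃ i : ℕ, 1 ≤ i ∧ i ≤ k ∧ (P b).lt (p b i) (p a i)

/-- The `k` most preferred items of agent `j`: those items with fewer than `k` items
strictly preferred to them by `j`. -/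
noncomputable def topItems {n : ℕ} {ι : Type} [Fintype ι] (P : Fin n → LinearOrder ι)
    (k : ℕ) (j : Fin n) : Finset ι :=
  Finset.univ.filter (fun o => (Finset.univ.filter (fun o' => (P j).lt o o')).card < k)

/-- The rank of item `o` in agent `j`'s preference (the most preferred item has rank 1). -/
noncomputable def rankOf {n : ℕ} {ι : Type} [Fintype ι] (P : Fin n → LinearOrder ι)
    (j : Fin n) (o : ι) : ℕ :=
  (Finset.univ.filter (fun o' => (P j).lt o o')).card + 1
lemma favorite_spec {ι : Type} (L : LinearOrder ι) (S : Finset ι) (h : S.Nonempty)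
    (x : ι) (hx : x ∈ S) (hmax : ∀ o ∈ S, L.le o x) : favorite L S h = x := by
  letI := L
  exact le_antisymm (S.max'_le h x hmax) (S.le_max' x hx)

lemma favorite_mem {ι : Type} (L : LinearOrder ι) (S : Finset ι) (h : S.Nonempty) :
    favorite L S h ∈ S := by
  letI := L
  exact S.max'_mem h

lemma seqAlloc_mem_set {n : ℕ} {ι : Type} [DecidableEq ι] (P : Fin n → LinearOrder ι) :
    ∀ (l : List (Fin n)) (S : Finset ι) (a : Fin n) (o : ι),
      (a, o) ∈ seqAlloc P l S → o ∈ S := by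
  intro l
  induction l with
  | nil => intro S a o h; simp [seqAlloc] at h
  | cons b rest ih =>
    intro S a o h
    rw [seqAlloc] at h
    split at h
    · rcases List.mem_cons.mp h with h1 | h2
      · rw [Prod.mk.injEq] at h1
        rw [h1.2]
        exact favorite_mem _ _ _
      · exact Finset.mem_of_mem_erase (ih _ _ _ h2)
    · simp at h

lemma seqAlloc_item_unique {n : ℕ} {ι : Type} [DecidableEq ι] (P : Fin n → LinearOrder ι) :
    ∀ (l : List (Fin n)) (S : Finset ι) (a b : Fin n) (o : ι),
      (a, o) ∈ seqAlloc P l S → (b, o) ∈ seqAlloc P l S → a = b := by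
  intro l
  induction l with
  | nil => intro S a b o h; simp [seqAlloc] at h
  | cons c rest ih =>
    intro S a b o ha hb
    rw [seqAlloc] at ha hb
    split at ha
    · rw [dif_pos ‹S.Nonempty›] at hb
      rcases List.mem_cons.mp ha with h1 | h1 <;> rcases List.mem_cons.mp hb with h2 | h2
      · rw [Prod.mk.injEq] at h1 h2; rw [h1.1, h2.1]
      · rw [Prod.mk.injEq] at h1
        exact absurd (h1.2 ▸ seqAlloc_mem_set P _ _ _ _ h2)
          (fun hh => (Finset.mem_erase.mp hh).1 rfl)
      · rw [Prod.mk.injEq] at h2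
        exact absurd (h2.2 ▸ seqAlloc_mem_set P _ _ _ _ h1)
          (fun hh => (Finset.mem_erase.mp hh).1 rfl)
      · exact ih _ _ _ _ h1 h2
    · simp at ha
lemma seqAlloc_round {n : ℕ} {ι : Type} [DecidableEq ι] (P : Fin n → LinearOrder ι) :
    ∀ (r : List (Fin n)) (l2 : List (Fin n)) (S : Finset ι) (q : Fin n → ι),
      r.Nodup →
      (∀ j, j ∈ r → q j ∈ S) →
      (∀ j, j ∈ r → ∀ o ∈ S, (P j).le o (q j)) →
      (∀ j j', q j = q j' → j = j') →
      seqAlloc P (r ++ l2) S =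
        r.map (fun a => (a, q a)) ++ seqAlloc P l2 (S \ r.toFinset.image q) := by
  intro r
  induction r with
  | nil => intro l2 S q _ _ _ _; simp
  | cons a rest ih =>
    intro l2 S q hnd hmem hmax hinj
    have haS : q a ∈ S := hmem a (by simp)
    have hS : S.Nonempty := ⟨q a, haS⟩
    have hfav : favorite (P a) S hS = q a :=
      favorite_spec _ _ _ _ haS (hmax a (by simp))
    have hrec : seqAlloc P (rest ++ l2) (S.erase (q a)) =
        rest.map (fun b => (b, q b)) ++
          seqAlloc P l2 (S.erase (q a) \ rest.toFinset.image q) := by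
      apply ih
      · exact hnd.of_cons
      · intro j hj
        refine Finset.mem_erase.mpr ⟨?_, hmem j (List.mem_cons_of_mem _ hj)⟩
        intro hqe
        exact (List.nodup_cons.mp hnd).1 ((hinj j a hqe) ▸ hj)
      · intro j hj o ho
        exact hmax j (List.mem_cons_of_mem _ hj) o (Finset.mem_of_mem_erase ho)
      · exact hinj
    have hset : S.erase (q a) \ rest.toFinset.image q =
        S \ (a :: rest).toFinset.image q := by
      ext o
      simp only [Finset.mem_sdiff, Finset.mem_erase, List.toFinset_cons,
        Finset.image_insert, Finset.mem_insert]
      tauto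
    rw [List.cons_append, seqAlloc, dif_pos hS, hfav, hrec, hset]
    simp
lemma p_inj {n k : ℕ} {ι : Type} [Fintype ι] {P : Fin n → LinearOrder ι} {M : ι → Fin n}
    {p : Fin n → ℕ → ι} (hp : IsRankingOf P k M p) :
    ∀ j i j' i', 1 ≤ i → i ≤ k → 1 ≤ i' → i' ≤ k → p j i = p j' i' → j = j' ∧ i = i' := by
  intro j i j' i' h1 h2 h3 h4 heq
  obtain ⟨hM, hc⟩ := hp j i h1 h2
  obtain ⟨hM', hc'⟩ := hp j' i' h3 h4
  have hj : j = j' := by rw [← hM, ← hM', heq]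
  subst hj
  refine ⟨rfl, ?_⟩
  rw [heq] at hc
  rw [hc] at hc'
  omega

lemma p_order {n k : ℕ} {ι : Type} [Fintype ι] {P : Fin n → LinearOrder ι} {M : ι → Fin n}
    {p : Fin n → ℕ → ι} (hp : IsRankingOf P k M p) (j : Fin n) {i i' : ℕ}
    (h1 : 1 ≤ i) (hlt : i < i') (h2 : i' ≤ k) : (P j).lt (p j i') (p j i) := by
  letI := P j
  obtain ⟨hM, hc⟩ := hp j i h1 (le_of_lt (lt_of_lt_of_le hlt h2))
  obtain ⟨hM', hc'⟩ := hp j i' (by omega) h2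
  have hne : p j i ≠ p j i' := fun h => by
    have := (p_inj hp j i j i' h1 (by omega) (by omega) h2 h).2
    omega
  rcases lt_trichotomy (p j i') (p j i) with h | h | h
  · exact h
  · exact absurd h.symm hne
  · exfalso
    have hsub : (Finset.univ.filter (fun o => M o = j ∧ (P j).lt (p j i') o)) ⊆
        (Finset.univ.filter (fun o => M o = j ∧ (P j).lt (p j i) o)) := by
      intro o ho
      simp only [Finset.mem_filter, Finset.mem_univ, true_and] at ho ⊢
      exact ⟨ho.1, lt_trans h ho.2⟩
    have := Finset.card_le_card hsub
    rw [hc, hc'] at this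
    omega

lemma bundle_eq {n k : ℕ} {ι : Type} [Fintype ι] [DecidableEq ι] {P : Fin n → LinearOrder ι} {M : ι → Fin n}
    {p : Fin n → ℕ → ι} (hbal : BalancedAlloc k M) (hp : IsRankingOf P k M p) (j : Fin n) :
    Finset.univ.filter (fun o => M o = j) = (Finset.Ico 1 (k+1)).image (p j) := by
  symm
  apply Finset.eq_of_subset_of_card_le
  · intro o ho
    obtain ⟨i, hi, rfl⟩ := Finset.mem_image.mp ho
    rw [Finset.mem_Ico] at hi
    simp only [Finset.mem_filter, Finset.mem_univ, true_and]
    exact (hp j i hi.1 (by omega)).1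
  · rw [hbal j, Finset.card_image_of_injOn, Nat.card_Ico]
    · omega
    intro i hi i' hi' heq
    simp only [Finset.coe_Ico, Set.mem_Ico] at hi hi'
    exact (p_inj hp j i j i' hi.1 (by omega) hi'.1 (by omega) heq).2
lemma Astep {n : ℕ} {ι : Type} [DecidableEq ι] (p : Fin n → ℕ → ι) (m : ℕ) :
    Finset.image (fun x : Fin n × ℕ => p x.1 x.2) (Finset.univ ×ˢ Finset.Ico 1 (m+2)) =
    Finset.image (fun x : Fin n × ℕ => p x.1 x.2) (Finset.univ ×ˢ Finset.Ico 1 (m+1)) ∪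
      Finset.image (fun j : Fin n => p j (m+1)) Finset.univ := by
  ext o
  simp only [Finset.mem_union, Finset.mem_image, Finset.mem_product, Finset.mem_Ico,
    Finset.mem_univ, true_and]
  constructor
  · rintro ⟨⟨j, i⟩, ⟨h1, h2⟩, rfl⟩
    by_cases hi : i = m + 1
    · right; exact ⟨j, by rw [hi]⟩
    · left; exact ⟨⟨j, i⟩, ⟨h1, by omega⟩, rfl⟩
  · rintro (⟨⟨j, i⟩, ⟨h1, h2⟩, rfl⟩ | ⟨j, rfl⟩)
    · exact ⟨⟨j, i⟩, ⟨h1, by omega⟩, rfl⟩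
    · exact ⟨⟨j, m+1⟩, ⟨by omega, by omega⟩, rfl⟩

lemma seqAlloc_flatten {n k : ℕ} {ι : Type} [Fintype ι] [DecidableEq ι]
    (P : Fin n → LinearOrder ι) (M : ι → Fin n) (p : Fin n → ℕ → ι)
    (hp : IsRankingOf P k M p) :
    ∀ (rs : List (List (Fin n))) (l2 : List (Fin n)) (t0 : ℕ),
      t0 + rs.length ≤ k →
      (∀ r ∈ rs, ∀ a : Fin n, r.count a = 1) →
      (∀ t, t0 < t → t ≤ t0 + rs.length → ∀ j : Fin n, ∀ o : ι,
        o ∉ Finset.image (fun x : Fin n × ℕ => p x.1 x.2) (Finset.univ ×ˢ Finset.Ico 1 t) →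
        (P j).le o (p j t)) →
      ∃ L : List (Fin n × ι),
        seqAlloc P (rs.flatten ++ l2)
            (Finset.univ \ Finset.image (fun x : Fin n × ℕ => p x.1 x.2)
              (Finset.univ ×ˢ Finset.Ico 1 (t0+1)))
          = L ++ seqAlloc P l2
              (Finset.univ \ Finset.image (fun x : Fin n × ℕ => p x.1 x.2)
                (Finset.univ ×ˢ Finset.Ico 1 (t0 + rs.length + 1)))
        ∧ ∀ t j, t0 < t → t ≤ t0 + rs.length → (j, p j t) ∈ L := by
  intro rs
  induction rs with
  | nil =>
    intro l2 t0 _ _ _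
    refine ⟨[], by simp, fun t j h1 h2 => ?_⟩
    simp only [List.length_nil, Nat.add_zero] at h2
    omega
  | cons r rest ih =>
    intro l2 t0 hlen hcnt hfav
    have hmem_r : ∀ a : Fin n, a ∈ r := fun a =>
      List.count_pos_iff.mp (by rw [hcnt r (by simp) a]; norm_num)
    have hnd : r.Nodup := List.nodup_iff_count_le_one.mpr
      (fun a => le_of_eq (hcnt r (by simp) a))
    have ht01 : t0 + 1 ≤ k := by simp at hlen; omega
    have hnotin : ∀ j : Fin n, p j (t0+1) ∉ Finset.image (fun x : Fin n × ℕ => p x.1 x.2)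
        (Finset.univ ×ˢ Finset.Ico 1 (t0+1)) := by
      intro j hin
      obtain ⟨⟨j', i⟩, hmem, heq⟩ := Finset.mem_image.mp hin
      simp only [Finset.mem_product, Finset.mem_Ico] at hmem
      have := (p_inj hp j' i j (t0+1) hmem.2.1 (by omega) (by omega) ht01 heq).2
      omega
    have hround := seqAlloc_round P r (rest.flatten ++ l2)
      (Finset.univ \ Finset.image (fun x : Fin n × ℕ => p x.1 x.2)
        (Finset.univ ×ˢ Finset.Ico 1 (t0+1)))
      (fun j => p j (t0+1)) hnd
      (fun j _ => Finset.mem_sdiff.mpr ⟨Finset.mem_univ _, hnotin j⟩)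
      (fun j _ o ho => hfav (t0+1) (by omega) (by simp only [List.length_cons]; omega) j o
        (Finset.mem_sdiff.mp ho).2)
      (fun j j' heq => (p_inj hp j (t0+1) j' (t0+1) (by omega) ht01 (by omega) ht01 heq).1)
    have hset : (Finset.univ \ Finset.image (fun x : Fin n × ℕ => p x.1 x.2)
          (Finset.univ ×ˢ Finset.Ico 1 (t0+1))) \
          r.toFinset.image (fun j => p j (t0+1)) =
        Finset.univ \ Finset.image (fun x : Fin n × ℕ => p x.1 x.2)
          (Finset.univ ×ˢ Finset.Ico 1 (t0+1+1)) := by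
      have hrt : r.toFinset = Finset.univ := by
        ext a; simp [hmem_r a]
      rw [hrt]
      have he : Finset.Ico 1 (t0+1+1) = Finset.Ico 1 (t0+2) := by norm_num
      rw [he, Astep p t0]
      ext o
      simp only [Finset.mem_sdiff, Finset.mem_union, Finset.mem_univ, true_and]
      tauto
    have hll : t0 + (r :: rest).length = t0 + 1 + rest.length := by
      simp only [List.length_cons]; omega
    obtain ⟨L', hL', hmemL'⟩ := ih l2 (t0+1)
      (by omega)
      (fun r' hr' => hcnt r' (List.mem_cons_of_mem _ hr'))
      (fun t h1 h2 j o ho => hfav t (by omega) (by omega) j o ho)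
    refine ⟨List.map (fun a => (a, p a (t0+1))) r ++ L', ?_, ?_⟩
    · rw [List.flatten_cons, List.append_assoc, hround, hset, hL', List.append_assoc, hll]
    · intro t j h1 h2
      rw [hll] at h2
      by_cases ht : t = t0 + 1
      · subst ht
        exact List.mem_append.mpr (Or.inl (List.mem_map.mpr ⟨j, hmem_r j, rfl⟩))
      · exact List.mem_append.mpr (Or.inr (hmemL' t j (by omega) (by omega)))
/-- A balanced allocation `M` is the outcome of every balanced alternation
policy if and only if for every round `1 ≤ t ≤ k` and every agent `j`, the item `p j t`
is `j`'s most preferred item among the items not allocated by `M` in earlier rounds. -/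
theorem necessary_assignment_balanced_alternation
    {ι : Type} [Fintype ι] [DecidableEq ι] {n k : ℕ} (hn : 0 < n) (hk : 1 ≤ k)
    (hcard : Fintype.card ι = k * n)
    (P : Fin n → LinearOrder ι) (M : ι → Fin n) (hbal : BalancedAlloc k M)
    (p : Fin n → ℕ → ι) (hp : IsRankingOf P k M p) :
    (∀ π : List (Fin n), BalAlt n k π → IsOutcome P π M) ↔
      ∀ t : ℕ, 1 ≤ t → t ≤ k → ∀ j : Fin n, ∀ o : ι,
        o ∉ Finset.image (fun x : Fin n × ℕ => p x.1 x.2)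
              (Finset.univ ×ˢ Finset.Ico 1 t) →
        (P j).le o (p j t) := by
  constructor
  · intro hAll t
    induction t using Nat.strong_induction_on with
    | _ t ih =>
    intro ht1 ht2 j o ho
    -- build a balanced alternation policy in which agent j picks first in round t
    classical
    set others : List (Fin n) := (List.finRange n).filter (fun a => a ≠ j) with hothers
    have hjno : j ∉ others := by simp [hothers]
    have hco : ∀ a : Fin n, a ≠ j → others.count a = 1 := by
      intro a ha
      rw [hothers, List.count_filter (by simp [ha])]
      exact List.count_eq_one_of_mem (List.nodup_finRange n) (List.mem_finRange a)
    set σ : List (Fin n) := if (t-1) % 2 = 0 then j :: others else others ++ [j] with hσ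
    have hσcount : ∀ a : Fin n, σ.count a = 1 := by
      intro a
      by_cases ha : a = j
      · subst ha
        rw [hσ]
        split <;>
          simp [List.count_cons, List.count_append, List.count_eq_zero.mpr hjno]
      · rw [hσ]
        split <;>
          simp [List.count_cons, List.count_append, hco a ha, ha, Ne.symm ha]
    have hσnd : σ.Nodup := List.nodup_iff_count_le_one.mpr (fun a => le_of_eq (hσcount a))
    have hσmem : ∀ a : Fin n, a ∈ σ := fun a =>
      List.count_pos_iff.mp (by rw [hσcount a]; norm_num)
    have hσlen : σ.length = n := by
      rw [← List.toFinset_card_of_nodup hσnd]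
      rw [show σ.toFinset = Finset.univ from by ext a; simp [hσmem a]]
      simp
    set f : ℕ → List (Fin n) := fun r => if r % 2 = 0 then σ else σ.reverse with hf
    set π : List (Fin n) := ((List.range k).map f).flatten with hπdef
    have hout : IsOutcome P π M := hAll π ⟨σ, hσlen, hσcount, rfl⟩
    -- decompose the policy at round t
    have hrange : List.range k =
        (List.range (t-1) ++ [t-1]) ++ (List.range (k-t)).map (fun x => t + x) := by
      conv_lhs => rw [show k = t + (k-t) by omega, List.range_add]
      congr 1
      conv_lhs => rw [show t = (t-1)+1 by omega, List.range_succ]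
    have hπ : π = ((List.range (t-1)).map f).flatten ++
        (f (t-1) ++ (((List.range (k-t)).map (fun x => t + x)).map f).flatten) := by
      rw [hπdef, hrange]
      simp [List.flatten_append]
    -- simulate the first t-1 rounds
    have hrl : ((List.range (t-1)).map f).length = t - 1 := by simp
    obtain ⟨L, hL, -⟩ := seqAlloc_flatten P M p hp ((List.range (t-1)).map f)
      (f (t-1) ++ (((List.range (k-t)).map (fun x => t + x)).map f).flatten) 0
      (by omega)
      (by
        intro r' hr' a
        obtain ⟨x, -, rfl⟩ := List.mem_map.mp hr'
        rw [hf]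
        dsimp only
        split
        · exact hσcount a
        · rw [List.count_reverse]; exact hσcount a)
      (fun t' h1 h2 j' o' ho' => ih t' (by omega) (by omega) (by omega) j' o' ho')
    rw [hrl] at hL
    have hzz : (0 : ℕ) + (t - 1) + 1 = t := by omega
    rw [hzz] at hL
    have hempty : (Finset.univ \ Finset.image (fun x : Fin n × ℕ => p x.1 x.2)
        (Finset.univ ×ˢ Finset.Ico 1 (0+1))) = (Finset.univ : Finset ι) := by
      simp
    rw [hempty] at hL
    -- agent j picks first in round t
    obtain ⟨tail, htail⟩ : ∃ tail, f (t-1) = j :: tail := by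
      by_cases hpar : (t-1) % 2 = 0
      · exact ⟨others, by rw [hf]; simp [hpar, hσ]⟩
      · exact ⟨others.reverse, by rw [hf]; simp [hpar, hσ]⟩
    set S : Finset ι := Finset.univ \ Finset.image (fun x : Fin n × ℕ => p x.1 x.2)
        (Finset.univ ×ˢ Finset.Ico 1 t) with hSdef
    have hpjtS : p j t ∈ S := by
      rw [hSdef]
      refine Finset.mem_sdiff.mpr ⟨Finset.mem_univ _, ?_⟩
      intro hin
      obtain ⟨⟨j', i⟩, hmem, heq⟩ := Finset.mem_image.mp hin
      simp only [Finset.mem_product, Finset.mem_Ico] at hmem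
      have := (p_inj hp j' i j t hmem.2.1 (by omega) ht1 ht2 heq).2
      omega
    have hS : S.Nonempty := ⟨p j t, hpjtS⟩
    set x : ι := favorite (P j) S hS with hxdef
    have hstep : seqAlloc P (f (t-1) ++
        (((List.range (k-t)).map (fun x => t + x)).map f).flatten) S =
        (j, x) :: seqAlloc P (tail ++ (((List.range (k-t)).map (fun x => t + x)).map f).flatten)
          (S.erase x) := by
      rw [htail, List.cons_append, seqAlloc, dif_pos hS]
    have hmemx : (j, x) ∈ seqAlloc P π Finset.univ := by
      rw [hπ, hL, hstep]
      exact List.mem_append.mpr (Or.inr List.mem_cons_self)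
    have hMx : M x = j := seqAlloc_item_unique P π Finset.univ (M x) j x (hout x) hmemx
    have hxS : x ∈ S := by rw [hxdef]; exact favorite_mem _ _ _
    have hxb : x ∈ (Finset.Ico 1 (k+1)).image (p j) := by
      rw [← bundle_eq hbal hp j]
      simp [hMx]
    obtain ⟨i, hi, hpe⟩ := Finset.mem_image.mp hxb
    rw [Finset.mem_Ico] at hi
    have hit : t ≤ i := by
      by_contra hcon
      push_neg at hcon
      have : x ∈ Finset.image (fun x : Fin n × ℕ => p x.1 x.2)
          (Finset.univ ×ˢ Finset.Ico 1 t) :=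
        Finset.mem_image.mpr ⟨⟨j, i⟩, by simp [Finset.mem_Ico]; omega, hpe⟩
      exact (Finset.mem_sdiff.mp (hSdef ▸ hxS)).2 this
    letI := P j
    have hox : (P j).le o x := by
      rw [hxdef]
      exact S.le_max' o (Finset.mem_sdiff.mpr ⟨Finset.mem_univ _, ho⟩)
    have hxt : (P j).le x (p j t) := by
      rcases eq_or_lt_of_le hit with h | h
      · rw [← hpe, ← h]
      · rw [← hpe]
        exact le_of_lt (p_order hp j ht1 h (by omega))
    exact le_trans hox hxt
  · intro hRHS π hBA
    obtain ⟨σ, hσlen, hσcount, hπ⟩ := hBA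
    set rs : List (List (Fin n)) :=
      (List.range k).map (fun r => if r % 2 = 0 then σ else σ.reverse) with hrs
    have hrl : rs.length = k := by simp [hrs]
    obtain ⟨L, hL, hmemL⟩ := seqAlloc_flatten P M p hp rs [] 0
      (by omega)
      (by
        intro r' hr' a
        rw [hrs] at hr'
        obtain ⟨x, -, rfl⟩ := List.mem_map.mp hr'
        split
        · exact hσcount a
        · rw [List.count_reverse]; exact hσcount a)
      (fun t' h1 h2 j' o' ho' => hRHS t' h1 (by omega) j' o' ho')
    have hempty : (Finset.univ \ Finset.image (fun x : Fin n × ℕ => p x.1 x.2)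
        (Finset.univ ×ˢ Finset.Ico 1 (0+1))) = (Finset.univ : Finset ι) := by
      simp
    rw [List.append_nil, hempty] at hL
    have hnil : seqAlloc P ([] : List (Fin n))
        (Finset.univ \ Finset.image (fun x : Fin n × ℕ => p x.1 x.2)
          (Finset.univ ×ˢ Finset.Ico 1 (0 + rs.length + 1))) = [] := by
      simp [seqAlloc]
    rw [hnil, List.append_nil] at hL
    intro o
    have hob : o ∈ (Finset.Ico 1 (k+1)).image (p (M o)) := by
      rw [← bundle_eq hbal hp (M o)]
      simp
    obtain ⟨i, hi, hpe⟩ := Finset.mem_image.mp hob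
    rw [Finset.mem_Ico] at hi
    have hpair : ((M o, o) : Fin n × ι) = (M o, p (M o) i) := by rw [hpe]
    rw [hπ, hL, hpair]
    exact hmemL i (M o) (by omega) (by omega)
end

section
/- Suppose item o is ranked at the k'-th position in agent a_1's preference, with k' ≤ k. Then there exists a balanced policy under which agent a_1 does not receive item o if and only if there exists a balanced policy π such that (i) a_1's turns in π are exactly the first k'−1 turns and the last k−k'+1 turns of the sequence, and (ii) agent a_1 does not receive item o under π. -/
open Finset
open scoped Classical

set_option linter.unusedSectionVars false
set_option maxHeartbeats 1000000

section A
variable {n : ℕ} {ι : Type} [DecidableEq ι]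

theorem aux_favorite_mem {L : LinearOrder ι} {S : Finset ι} (h : S.Nonempty) : favorite L S h ∈ S :=
  @Finset.max'_mem ι L S h

theorem aux_le_favorite {L : LinearOrder ι} {S : Finset ι} (h : S.Nonempty) {x : ι} (hx : x ∈ S) :
    L.le x (favorite L S h) := @Finset.le_max' ι L S x hx

theorem aux_lt_favorite {L : LinearOrder ι} {S : Finset ι} (h : S.Nonempty) {x : ι}
    (hx : x ∈ S) (hne : x ≠ favorite L S h) : L.lt x (favorite L S h) := by
  letI := L
  exact lt_of_le_of_ne (aux_le_favorite h hx) hne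

theorem aux_favorite_congr {L : LinearOrder ι} {S S' : Finset ι} (e : S = S')
    (h : S.Nonempty) (h' : S'.Nonempty) : favorite L S h = favorite L S' h' := by
  subst e; rfl

noncomputable def remain (P : Fin n → LinearOrder ι) : List (Fin n) → Finset ι → Finset ι
  | [], S => S
  | a :: rest, S =>
    if h : S.Nonempty then remain P rest (S.erase (favorite (P a) S h)) else S

variable (P : Fin n → LinearOrder ι)

theorem remain_nil (S : Finset ι) : remain P [] S = S := rfl

theorem remain_cons (a : Fin n) (rest : List (Fin n)) (S : Finset ι) :
    remain P (a :: rest) S =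
      if h : S.Nonempty then remain P rest (S.erase (favorite (P a) S h)) else S := rfl

theorem seqAlloc_cons (a : Fin n) (rest : List (Fin n)) (S : Finset ι) :
    seqAlloc P (a :: rest) S =
      if h : S.Nonempty then
        (a, favorite (P a) S h) :: seqAlloc P rest (S.erase (favorite (P a) S h))
      else [] := rfl

theorem remain_empty (σ : List (Fin n)) : remain P σ (∅ : Finset ι) = ∅ := by
  cases σ <;> simp [remain_nil, remain_cons]

theorem seqAlloc_empty (σ : List (Fin n)) : seqAlloc P σ (∅ : Finset ι) = [] := by
  cases σ <;> simp [seqAlloc, seqAlloc_cons]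

theorem remain_subset (σ : List (Fin n)) (S : Finset ι) : remain P σ S ⊆ S := by
  induction σ generalizing S with
  | nil => simp [remain_nil]
  | cons a rest ih =>
      rw [remain_cons]
      split
      · exact (ih _).trans (Finset.erase_subset _ _)
      · exact Finset.Subset.refl _

theorem mem_fst_of_mem_seqAlloc {σ : List (Fin n)} {S : Finset ι} {p : Fin n × ι}
    (hp : p ∈ seqAlloc P σ S) : p.1 ∈ σ := by
  induction σ generalizing S with
  | nil => simp [seqAlloc] at hp
  | cons a rest ih =>
      rw [seqAlloc_cons] at hp
      split at hp
      · rcases List.mem_cons.1 hp with h | h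
        · simp [h]
        · exact List.mem_cons_of_mem _ (ih h)
      · simp at hp

theorem mem_snd_of_mem_seqAlloc {σ : List (Fin n)} {S : Finset ι} {p : Fin n × ι}
    (hp : p ∈ seqAlloc P σ S) : p.2 ∈ S := by
  induction σ generalizing S with
  | nil => simp [seqAlloc] at hp
  | cons a rest ih =>
      rw [seqAlloc_cons] at hp
      split at hp
      next h =>
        rcases List.mem_cons.1 hp with h1 | h1
        · rw [h1]; exact aux_favorite_mem h
        · exact Finset.erase_subset _ _ (ih h1)
      next h => simp at hp

theorem seqAlloc_append (α β : List (Fin n)) (S : Finset ι) :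
    seqAlloc P (α ++ β) S = seqAlloc P α S ++ seqAlloc P β (remain P α S) := by
  induction α generalizing S with
  | nil => simp [remain_nil]; rfl
  | cons a rest ih =>
      by_cases h : S.Nonempty
      · simp only [List.cons_append, seqAlloc_cons, remain_cons, dif_pos h, ih]
      · rw [Finset.not_nonempty_iff_eq_empty] at h; subst h
        simp [seqAlloc_empty, remain_empty]

theorem remain_append (α β : List (Fin n)) (S : Finset ι) :
    remain P (α ++ β) S = remain P β (remain P α S) := by
  induction α generalizing S with
  | nil => simp [remain_nil]
  | cons a rest ih =>
      by_cases h : S.Nonempty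
      · simp only [List.cons_append, remain_cons, dif_pos h, ih]
      · rw [Finset.not_nonempty_iff_eq_empty] at h; subst h
        simp [remain_empty]

theorem remain_eq_empty {σ : List (Fin n)} {S : Finset ι} (h : S.card ≤ σ.length) :
    remain P σ S = ∅ := by
  induction σ generalizing S with
  | nil => exact Finset.card_eq_zero.1 (Nat.le_zero.1 h)
  | cons a rest ih =>
      by_cases hS : S.Nonempty
      · rw [remain_cons, dif_pos hS]
        apply ih
        rw [Finset.card_erase_of_mem (aux_favorite_mem hS)]
        have hpos := Finset.card_pos.2 hS
        simp only [List.length_cons] at h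
        omega
      · rw [Finset.not_nonempty_iff_eq_empty] at hS; subst hS
        exact remain_empty P _

theorem remain_mono (σ : List (Fin n)) {S₁ S₂ : Finset ι} (hss : S₁ ⊆ S₂) :
    remain P σ S₁ ⊆ remain P σ S₂ := by
  induction σ generalizing S₁ S₂ with
  | nil => simpa [remain_nil] using hss
  | cons a rest ih =>
      by_cases h₁ : S₁.Nonempty
      · have h₂ : S₂.Nonempty := h₁.mono hss
        rw [remain_cons, dif_pos h₁, remain_cons, dif_pos h₂]
        by_cases hm : favorite (P a) S₂ h₂ ∈ S₁
        · have hfav : favorite (P a) S₁ h₁ = favorite (P a) S₂ h₂ := by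
            letI := P a
            exact le_antisymm (aux_le_favorite h₂ (hss (aux_favorite_mem h₁)))
              (aux_le_favorite h₁ hm)
          rw [hfav]
          exact ih (Finset.erase_subset_erase _ hss)
        · refine ih ?_
          intro x hx
          have hx1 : x ∈ S₁ := Finset.mem_of_mem_erase hx
          exact Finset.mem_erase.2 ⟨fun hxf => hm (hxf ▸ hx1), hss hx1⟩
      · rw [Finset.not_nonempty_iff_eq_empty] at h₁; subst h₁
        simp [remain_empty]

theorem remain_filter_diff_subset (c : Fin n) :
    ∀ (σ : List (Fin n)) (S W : Finset ι),
      (∀ y : ι, (c, y) ∈ seqAlloc P σ S → y ∈ W) →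
      remain P (σ.filter (fun x => x ≠ c)) (S \ W) ⊆ remain P σ S ∪ W := by
  intro σ
  induction σ with
  | nil =>
      intro S W _
      simp only [List.filter_nil, remain_nil]
      exact (Finset.sdiff_subset).trans Finset.subset_union_left
  | cons a rest ih =>
    intro S W hpick
    by_cases hS : S.Nonempty
    · set m := favorite (P a) S hS with hm
      have hrem : remain P (a :: rest) S = remain P rest (S.erase m) := by
        rw [remain_cons, dif_pos hS]
      have hpick' : ∀ y : ι, (c, y) ∈ seqAlloc P rest (S.erase m) → y ∈ W := fun y hy =>
        hpick y (by rw [seqAlloc_cons, dif_pos hS]; exact List.mem_cons_of_mem _ hy)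
      by_cases hac : a = c
      · subst hac
        have hmW : m ∈ W := hpick m (by
          rw [seqAlloc_cons, dif_pos hS]; exact List.mem_cons_self)
        have hfilter : (a :: rest).filter (fun x => x ≠ a) = rest.filter (fun x => x ≠ a) := by
          simp
        have hSW : S \ W = (S.erase m) \ W := by
          ext x
          simp only [Finset.mem_sdiff, Finset.mem_erase]
          constructor
          · rintro ⟨h1, h2⟩; exact ⟨⟨fun he => h2 (he ▸ hmW), h1⟩, h2⟩
          · rintro ⟨⟨_, h1⟩, h2⟩; exact ⟨h1, h2⟩
        rw [hfilter, hSW, hrem]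
        exact ih (S.erase m) W hpick'
      · have hfilter : (a :: rest).filter (fun x => x ≠ c)
            = a :: rest.filter (fun x => x ≠ c) := by simp [hac]
        rw [hfilter, hrem]
        by_cases hSW : (S \ W).Nonempty
        · set m' := favorite (P a) (S \ W) hSW with hm'
          rw [remain_cons, dif_pos hSW]
          by_cases hmW : m ∈ W
          · have hset : (S \ W).erase m' = (S.erase m) \ (insert m' W) := by
              ext x
              simp only [Finset.mem_erase, Finset.mem_sdiff, Finset.mem_insert]
              constructor
              · rintro ⟨hne, hxS, hxW⟩
                exact ⟨⟨fun he => hxW (he ▸ hmW), hxS⟩, fun h => h.elim hne hxW⟩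
              · rintro ⟨⟨hxm, hxS⟩, hx⟩
                exact ⟨fun h => hx (Or.inl h), hxS, fun h => hx (Or.inr h)⟩
            rw [hset]
            intro x hx
            have hxm' : x ≠ m' := by
              have hx2 := remain_subset P _ _ hx
              simp only [Finset.mem_sdiff, Finset.mem_insert] at hx2
              exact fun he => hx2.2 (Or.inl he)
            have hx3 := ih (S.erase m) (insert m' W)
              (fun y hy => Finset.mem_insert_of_mem (hpick' y hy)) hx
            rcases Finset.mem_union.1 hx3 with h | h
            · exact Finset.mem_union_left _ h
            · rcases Finset.mem_insert.1 h with h | h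
              · exact absurd h hxm'
              · exact Finset.mem_union_right _ h
          · have hmSW : m ∈ S \ W := Finset.mem_sdiff.2 ⟨aux_favorite_mem hS, hmW⟩
            have hmm : m' = m := by
              letI := P a
              exact le_antisymm
                (aux_le_favorite hS (Finset.mem_sdiff.1 (aux_favorite_mem hSW)).1)
                (aux_le_favorite hSW hmSW)
            have hset : (S \ W).erase m' = (S.erase m) \ W := by
              rw [hmm]; ext x
              simp only [Finset.mem_erase, Finset.mem_sdiff]
              tauto
            rw [hset]
            exact ih (S.erase m) W hpick'
        · rw [Finset.not_nonempty_iff_eq_empty] at hSW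
          rw [hSW, remain_empty]
          exact Finset.empty_subset _
    · rw [Finset.not_nonempty_iff_eq_empty] at hS; subst hS
      simp [remain_empty]

theorem exists_split (σ : List (Fin n)) (S : Finset ι) (o : ι) (ho : o ∈ S) :
    o ∈ remain P σ S ∨
      ∃ (α : List (Fin n)) (b : Fin n) (β : List (Fin n)),
        σ = α ++ b :: β ∧
          ∃ hα : (remain P α S).Nonempty, favorite (P b) (remain P α S) hα = o := by
  induction σ generalizing S with
  | nil => left; exact ho
  | cons a rest ih =>
    have hS : S.Nonempty := ⟨o, ho⟩
    by_cases hfav : favorite (P a) S hS = o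
    · right
      exact ⟨[], a, rest, rfl, hS, hfav⟩
    · have ho' : o ∈ S.erase (favorite (P a) S hS) :=
        Finset.mem_erase.2 ⟨fun h => hfav h.symm, ho⟩
      rcases ih (S.erase (favorite (P a) S hS)) ho' with h | ⟨α, b, β, hseq, hα, hf⟩
      · left; rw [remain_cons, dif_pos hS]; exact h
      · right
        have e : remain P (a :: α) S = remain P α (S.erase (favorite (P a) S hS)) := by
          rw [remain_cons, dif_pos hS]
        refine ⟨a :: α, b, β, by rw [hseq]; rfl, e ▸ hα, ?_⟩
        rw [aux_favorite_congr e (e ▸ hα) hα]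
        exact hf

theorem lt_of_pick_of_mem_remain {σ : List (Fin n)} {S : Finset ι} {o : ι}
    (hr : o ∈ remain P σ S) {c : Fin n} {y : ι} (hy : (c, y) ∈ seqAlloc P σ S) :
    (P c).lt o y := by
  induction σ generalizing S with
  | nil => simp [seqAlloc] at hy
  | cons a rest ih =>
    by_cases hS : S.Nonempty
    · rw [remain_cons, dif_pos hS] at hr
      rw [seqAlloc_cons, dif_pos hS] at hy
      rcases List.mem_cons.1 hy with h | h
      · have h' : c = a ∧ y = favorite (P a) S hS := by
          simpa [Prod.ext_iff] using h
        obtain ⟨rfl, rfl⟩ := h'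
        have ho' : o ∈ S.erase (favorite (P c) S hS) := remain_subset P _ _ hr
        exact aux_lt_favorite hS (Finset.mem_of_mem_erase ho') (Finset.mem_erase.1 ho').1
      · exact ih hr h
    · rw [seqAlloc_cons, dif_neg hS] at hy; simp at hy

theorem replicate_run (c : Fin n) :
    ∀ (j : ℕ) (S U : Finset ι), U ⊆ S → U.card = j →
      (∀ u ∈ U, ∀ x ∈ S, (P c).lt u x → x ∈ U) →
      remain P (List.replicate j c) S = S \ U ∧
        ∀ p : Fin n × ι, p ∈ seqAlloc P (List.replicate j c) S → p.2 ∈ U := by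
  intro j
  induction j with
  | zero =>
      intro S U _ hcard _
      have hU : U = ∅ := Finset.card_eq_zero.1 hcard
      subst hU
      constructor
      · simp [remain_nil]
      · intro p hp; simp [seqAlloc] at hp
  | succ j ih =>
    intro S U hUS hcard hup
    have hUne : U.Nonempty := Finset.card_pos.1 (by omega)
    have hS : S.Nonempty := hUne.mono hUS
    set m := favorite (P c) S hS with hm
    have hmU : m ∈ U := by
      obtain ⟨u, hu⟩ := hUne
      by_cases h : u = m
      · exact h ▸ hu
      · exact hup u hu m (aux_favorite_mem hS) (aux_lt_favorite hS (hUS hu) h)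
    have h1 : U.erase m ⊆ S.erase m := Finset.erase_subset_erase _ hUS
    have h2 : (U.erase m).card = j := by
      rw [Finset.card_erase_of_mem hmU, hcard]
      omega
    have h3 : ∀ u ∈ U.erase m, ∀ x ∈ S.erase m, (P c).lt u x → x ∈ U.erase m := by
      intro u hu x hx hlt
      have hxU : x ∈ U := hup u (Finset.mem_of_mem_erase hu) x (Finset.mem_of_mem_erase hx) hlt
      exact Finset.mem_erase.2 ⟨(Finset.mem_erase.1 hx).1, hxU⟩
    obtain ⟨ihr, ihp⟩ := ih (S.erase m) (U.erase m) h1 h2 h3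
    have hrep : List.replicate (j+1) c = c :: List.replicate j c := rfl
    constructor
    · rw [hrep, remain_cons, dif_pos hS, ihr]
      ext x
      simp only [Finset.mem_sdiff, Finset.mem_erase]
      constructor
      · rintro ⟨⟨hxm, hxS⟩, hxU⟩
        exact ⟨hxS, fun hxUmem => hxU ⟨hxm, hxUmem⟩⟩
      · rintro ⟨hxS, hxU⟩
        exact ⟨⟨fun he => hxU (he ▸ hmU), hxS⟩, fun h => hxU h.2⟩
    · intro p hp
      rw [hrep, seqAlloc_cons, dif_pos hS] at hp
      rcases List.mem_cons.1 hp with h | h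
      · rw [h]; exact hmU
      · exact Finset.mem_of_mem_erase (ihp p h)

theorem length_eq_sum_count (l : List (Fin n)) : l.length = ∑ a : Fin n, l.count a := by
  induction l with
  | nil => simp
  | cons b l ih =>
    rw [List.length_cons, ih]
    have : ∀ a : Fin n, (b :: l).count a = l.count a + if a = b then 1 else 0 := by
      intro a; rw [List.count_cons]; simp only [beq_iff_eq]
      by_cases h : a = b
      · simp [h]
      · simp only [if_neg h, if_neg (fun he : b = a => h he.symm)]
    rw [Finset.sum_congr rfl (fun a _ => this a), Finset.sum_add_distrib]
    simp

end A

/-- If item `o` is ranked `k'`-th (`k' ≤ k`) by agent `a_1`, then some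
balanced policy denies `o` to `a_1` iff some balanced policy in which `a_1`'s turns are
exactly the first `k' - 1` and the last `k - k' + 1` turns denies `o` to `a_1`. -/
theorem necessary_item_balanced_normal_form
    {ι : Type} [Fintype ι] [DecidableEq ι] {n k : ℕ} (hn : 0 < n) (hk : 1 ≤ k)
    (hcard : Fintype.card ι = k * n)
    (P : Fin n → LinearOrder ι) (a1 : Fin n) (o : ι)
    (k' : ℕ) (hk'1 : 1 ≤ k') (hk'k : k' ≤ k) (hrank : rankOf P a1 o = k') :
    (∃ π : List (Fin n), BalancedPolicy k π ∧ o ∉ receives P π a1) ↔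
      ∃ π : List (Fin n), BalancedPolicy k π ∧
        (∀ (t : ℕ) (ht : t < π.length),
          π.get ⟨t, ht⟩ = a1 ↔ (t < k' - 1 ∨ k * n - (k - k' + 1) ≤ t)) ∧
        o ∉ receives P π a1 := by
  constructor
  · rintro ⟨π, hbal, hno⟩
    simp only [receives, Finset.mem_filter, Finset.mem_univ, true_and] at hno
    have hrk := hrank
    unfold rankOf at hrk
    set T : Finset ι := Finset.univ.filter (fun o' => (P a1).lt o o') with hTdef
    -- hrk : T.card + 1 = k'
    have hoT : o ∉ T := by
      rw [hTdef]
      simp only [Finset.mem_filter, Finset.mem_univ, true_and]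
      letI := P a1
      exact lt_irrefl o
    have hkkn : k ≤ k * n := Nat.le_mul_of_pos_right k hn
    have hlen : π.length = k * n := by
      calc π.length = ∑ a : Fin n, π.count a := length_eq_sum_count π
        _ = ∑ _a : Fin n, k := Finset.sum_congr rfl (fun a _ => hbal a)
        _ = n * k := by simp [Finset.sum_const, Finset.card_univ]
        _ = k * n := Nat.mul_comm n k
    have hrem_univ : remain P π (Finset.univ : Finset ι) = ∅ := by
      apply remain_eq_empty
      rw [Finset.card_univ, hcard, hlen]
    rcases exists_split P π Finset.univ o (Finset.mem_univ o) with hcase | ⟨α, b, β, hsplit, hαne, hfav⟩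
    · rw [hrem_univ] at hcase
      exact absurd hcase (Finset.notMem_empty o)
    have hback : seqAlloc P (α ++ [b]) (Finset.univ : Finset ι)
        = seqAlloc P α Finset.univ ++ [(b, o)] := by
      rw [seqAlloc_append]
      congr 1
      rw [seqAlloc_cons, dif_pos hαne, hfav]
      rfl
    have hbo : (b, o) ∈ seqAlloc P π (Finset.univ : Finset ι) := by
      have h1 : π = (α ++ [b]) ++ β := by rw [hsplit]; simp
      rw [h1, seqAlloc_append, hback]
      simp
    have hba1 : b ≠ a1 := by rintro rfl; exact hno hbo
    have hremα : o ∈ remain P α (Finset.univ : Finset ι) := hfav ▸ aux_favorite_mem hαne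
    have hpicks : ∀ y : ι, (a1, y) ∈ seqAlloc P (α ++ [b]) (Finset.univ : Finset ι) → y ∈ T := by
      intro y hy
      rw [hback, List.mem_append] at hy
      rcases hy with hy | hy
      · have hlt := lt_of_pick_of_mem_remain P hremα hy
        rw [hTdef]
        simp only [Finset.mem_filter, Finset.mem_univ, true_and]
        exact hlt
      · simp only [List.mem_singleton, Prod.mk.injEq] at hy
        exact absurd hy.1.symm hba1
    have hK := remain_filter_diff_subset P a1 (α ++ [b]) Finset.univ T hpicks
    have hrem1 : remain P (α ++ [b]) (Finset.univ : Finset ι)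
        = (remain P α Finset.univ).erase o := by
      rw [remain_append, remain_cons, dif_pos hαne, hfav, remain_nil]
    have honot : o ∉ remain P ((α ++ [b]).filter (fun x => x ≠ a1))
        ((Finset.univ : Finset ι) \ T) := by
      intro hmem
      rcases Finset.mem_union.1 (hK hmem) with h | h
      · rw [hrem1] at h
        exact Finset.notMem_erase o _ h
      · exact hoT h
    set ρ := π.filter (fun x => x ≠ a1) with hρdef
    have hρmem : ∀ x ∈ ρ, x ≠ a1 := by
      intro x hx
      rw [hρdef] at hx
      simpa using (List.mem_filter.1 hx).2
    have hρsplit : ρ = ((α ++ [b]).filter (fun x => x ≠ a1))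
        ++ (β.filter (fun x => x ≠ a1)) := by
      rw [hρdef, hsplit]
      simp [List.filter_append, List.filter_cons, hba1]
    have honotρ : o ∉ remain P ρ ((Finset.univ : Finset ι) \ T) := by
      rw [hρsplit, remain_append]
      intro hmem
      exact honot (remain_subset P _ _ hmem)
    have hρcount : ∀ a : Fin n, ρ.count a = if a = a1 then 0 else k := by
      intro a
      by_cases ha : a = a1
      · subst ha
        rw [if_pos rfl, List.count_eq_zero]
        intro hmem
        have := List.mem_filter.1 (hρdef ▸ hmem)
        simp at this
      · rw [if_neg ha, hρdef, List.count_filter (by simp [ha])]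
        exact hbal a
    have hρlen : ρ.length = k * n - k := by
      have h1 : ρ.length = ∑ a : Fin n, ρ.count a := length_eq_sum_count ρ
      have h2 : ∀ a : Fin n, ρ.count a + (if a = a1 then k else 0) = k := by
        intro a
        rw [hρcount a]
        by_cases ha : a = a1 <;> simp [ha]
      have h3 : ∑ a : Fin n, (ρ.count a + (if a = a1 then k else 0)) = ∑ _a : Fin n, k :=
        Finset.sum_congr rfl (fun a _ => h2 a)
      rw [Finset.sum_add_distrib] at h3
      rw [Finset.sum_ite_eq' Finset.univ a1 (fun _ => k)] at h3
      simp only [Finset.mem_univ, if_true, Finset.sum_const, Finset.card_univ,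
        Fintype.card_fin, smul_eq_mul] at h3
      have h6 : k * n = n * k := Nat.mul_comm k n
      omega
    refine ⟨List.replicate (k' - 1) a1 ++ (ρ ++ List.replicate (k - k' + 1) a1), ?_, ?_, ?_⟩
    · -- balanced
      intro a
      rw [List.count_append, List.count_append, hρcount a]
      by_cases ha : a = a1
      · subst ha
        rw [List.count_replicate_self, List.count_replicate_self, if_pos rfl]
        omega
      · have hz : ∀ m : ℕ, (List.replicate m a1).count a = 0 := by
          intro m
          rw [List.count_eq_zero]
          intro hmem
          exact ha (List.eq_of_mem_replicate hmem)
        rw [hz, hz, if_neg ha]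
        omega
    · -- turn positions
      intro t ht
      have hlen' : (List.replicate (k' - 1) a1 ++ (ρ ++ List.replicate (k - k' + 1) a1)).length
          = (k' - 1) + (ρ.length + (k - k' + 1)) := by
        simp [List.length_append, List.length_replicate]
      simp only [List.get_eq_getElem]
      rw [List.getElem_append]
      by_cases h1 : t < k' - 1
      · rw [dif_pos (by simpa using h1)]
        rw [List.getElem_replicate]
        simp [h1]
      · rw [dif_neg (by simpa using h1)]
        simp only [List.length_replicate]
        rw [List.getElem_append]
        by_cases h2 : t - (k' - 1) < ρ.length
        · rw [dif_pos (by simpa using h2)]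
          have hmem : ρ[t - (k' - 1)]'(by simpa using h2) ∈ ρ := List.getElem_mem _
          have hne : ρ[t - (k' - 1)]'(by simpa using h2) ≠ a1 := hρmem _ hmem
          simp only [hne, false_iff]
          push_neg
          constructor
          · omega
          · omega
        · rw [dif_neg (by simpa using h2)]
          rw [List.getElem_replicate]
          simp only [true_iff]
          right
          rw [hlen'] at ht
          omega
    · -- o not received
      simp only [receives, Finset.mem_filter, Finset.mem_univ, true_and]
      intro hmem
      have hTup : ∀ u ∈ T, ∀ x ∈ (Finset.univ : Finset ι), (P a1).lt u x → x ∈ T := by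
        intro u hu x _ hlt
        rw [hTdef] at hu ⊢
        simp only [Finset.mem_filter, Finset.mem_univ, true_and] at hu ⊢
        letI := P a1
        exact lt_trans hu hlt
      have hTcard' : T.card = k' - 1 := by omega
      obtain ⟨hrep_rem, hrep_pick⟩ :=
        replicate_run P a1 (k' - 1) Finset.univ T (Finset.subset_univ T) hTcard' hTup
      rw [seqAlloc_append, List.mem_append] at hmem
      rcases hmem with h | h
      · exact hoT (hrep_pick _ h)
      · rw [hrep_rem, seqAlloc_append, List.mem_append] at h
        rcases h with h | h
        · exact hρmem _ (mem_fst_of_mem_seqAlloc P h) rfl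
        · exact honotρ (mem_snd_of_mem_seqAlloc P h)
  · rintro ⟨π, h1, _, h3⟩
    exact ⟨π, h1, h3⟩
end
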